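/- Let μ, ν be generalised signed Radon measures on [0,∞) such that ∫ e^{−λx} |μ|(dx) < ∞ and ∫ e^{−λx} |ν|(dx) < ∞ for all λ > 0. If Ψ_μ(λ) = Ψ_ν(λ) for all λ > 0, then μ = ν. -/

import Mathlib

open MeasureTheory Filter Topology Set
open scoped NNReal ENNReal

section Aux

/-- Integrability of monomials against a finite measure concentrated on `[0,1]`. -/
lemma aux_integrable_pow (α : Measure ℝ) [IsFiniteMeasure α]
    (hα : α (Set.Icc (0:ℝ) 1)ᶜ = 0) (n : ℕ) :
    Integrable (fun t : ℝ => t ^ n) α := by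
  have hae : ∀ᵐ t ∂α, t ∈ Set.Icc (0:ℝ) 1 := by
    rw [Filter.eventually_iff, mem_ae_iff]
    exact hα
  refine (integrable_const (1:ℝ)).mono' ((continuous_pow n).aestronglyMeasurable) ?_
  filter_upwards [hae] with t ht
  have h1 : |t| ≤ 1 := abs_le.2 ⟨le_trans (by norm_num) ht.1, ht.2⟩
  calc ‖t ^ n‖ = |t| ^ n := by rw [Real.norm_eq_abs, abs_pow]
    _ ≤ 1 := pow_le_one₀ (abs_nonneg t) h1

/-- Integrals of polynomials agree when all moments agree. -/
lemma aux_integral_poly_eq (α β : Measure ℝ) [IsFiniteMeasure α] [IsFiniteMeasure β]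
    (hα : α (Set.Icc (0:ℝ) 1)ᶜ = 0) (hβ : β (Set.Icc (0:ℝ) 1)ᶜ = 0)
    (h : ∀ n : ℕ, ∫ t, t ^ n ∂α = ∫ t, t ^ n ∂β) (p : Polynomial ℝ) :
    ∫ t, p.eval t ∂α = ∫ t, p.eval t ∂β := by
  have key : ∀ γ : Measure ℝ, IsFiniteMeasure γ → γ (Set.Icc (0:ℝ) 1)ᶜ = 0 →
      ∫ t, p.eval t ∂γ =
        ∑ i ∈ Finset.range (p.natDegree + 1), p.coeff i * ∫ t, t ^ i ∂γ := by
    intro γ hfin hγ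
    have : ∀ t : ℝ, p.eval t = ∑ i ∈ Finset.range (p.natDegree + 1), p.coeff i * t ^ i := by
      intro t
      rw [Polynomial.eval_eq_sum_range]
    simp_rw [this]
    rw [integral_finset_sum]
    · exact Finset.sum_congr rfl fun i _ => by rw [integral_const_mul]
    · exact fun i _ => (aux_integrable_pow γ hγ i).const_mul _
  rw [key α inferInstance hα, key β inferInstance hβ]
  exact Finset.sum_congr rfl fun i _ => by rw [h i]

/-- Two finite measures concentrated on `[0,1]` with equal moments are equal. -/
lemma aux_ext_of_moments (α β : Measure ℝ) [IsFiniteMeasure α] [IsFiniteMeasure β]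
    (hα : α (Set.Icc (0:ℝ) 1)ᶜ = 0) (hβ : β (Set.Icc (0:ℝ) 1)ᶜ = 0)
    (h : ∀ n : ℕ, ∫ t, t ^ n ∂α = ∫ t, t ^ n ∂β) : α = β := by
  have haeα : ∀ᵐ t ∂α, t ∈ Set.Icc (0:ℝ) 1 := by
    rw [Filter.eventually_iff, mem_ae_iff]; exact hα
  have haeβ : ∀ᵐ t ∂β, t ∈ Set.Icc (0:ℝ) 1 := by
    rw [Filter.eventually_iff, mem_ae_iff]; exact hβ
  -- main step: integrals of continuous bounded functions agree
  have key : ∀ g : ℝ → ℝ, Continuous g → ∀ C : ℝ, (∀ t, |g t| ≤ C) →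
      ∫ t, g t ∂α = ∫ t, g t ∂β := by
    intro g hg C hC
    have hintα : Integrable g α :=
      (integrable_const C).mono' hg.aestronglyMeasurable
        (Filter.Eventually.of_forall fun t => by simpa [Real.norm_eq_abs] using hC t)
    have hintβ : Integrable g β :=
      (integrable_const C).mono' hg.aestronglyMeasurable
        (Filter.Eventually.of_forall fun t => by simpa [Real.norm_eq_abs] using hC t)
    set M : ℝ := (α Set.univ).toReal + (β Set.univ).toReal with hM
    have hM0 : 0 ≤ M := by positivity
    have habs : ∀ ε : ℝ, 0 < ε → |∫ t, g t ∂α - ∫ t, g t ∂β| ≤ 0 + ε := by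
      intro ε hε
      have hε' : 0 < ε / (M + 1) := by positivity
      obtain ⟨p, hp⟩ := exists_polynomial_near_of_continuousOn 0 1 g
        hg.continuousOn (ε / (M + 1)) hε'
      have hintpα : Integrable (fun t => p.eval t) α := by
        have : ∀ i ∈ Finset.range (p.natDegree + 1), Integrable
            (fun t : ℝ => p.coeff i * t ^ i) α :=
          fun i _ => (aux_integrable_pow α hα i).const_mul _
        have := integrable_finset_sum (Finset.range (p.natDegree + 1)) this
        refine this.congr (Filter.Eventually.of_forall fun t => ?_)
        simp only [Polynomial.eval_eq_sum_range]
      have hintpβ : Integrable (fun t => p.eval t) β := by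
        have : ∀ i ∈ Finset.range (p.natDegree + 1), Integrable
            (fun t : ℝ => p.coeff i * t ^ i) β :=
          fun i _ => (aux_integrable_pow β hβ i).const_mul _
        have := integrable_finset_sum (Finset.range (p.natDegree + 1)) this
        refine this.congr (Filter.Eventually.of_forall fun t => ?_)
        simp only [Polynomial.eval_eq_sum_range]
      have hpeq : ∫ t, p.eval t ∂α = ∫ t, p.eval t ∂β :=
        aux_integral_poly_eq α β hα hβ h p
      have hgpα : |∫ t, g t ∂α - ∫ t, p.eval t ∂α| ≤ (ε / (M + 1)) * (α Set.univ).toReal := by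
        rw [← integral_sub hintα hintpα]
        have := norm_integral_le_of_norm_le_const (μ := α)
          (f := fun t => g t - p.eval t) (C := ε / (M + 1)) ?_
        · simpa [Real.norm_eq_abs, Measure.real] using this
        · filter_upwards [haeα] with t ht
          have := hp t ht
          rw [Real.norm_eq_abs, abs_sub_comm]
          exact le_of_lt this
      have hgpβ : |∫ t, g t ∂β - ∫ t, p.eval t ∂β| ≤ (ε / (M + 1)) * (β Set.univ).toReal := by
        rw [← integral_sub hintβ hintpβ]
        have := norm_integral_le_of_norm_le_const (μ := β)
          (f := fun t => g t - p.eval t) (C := ε / (M + 1)) ?_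
        · simpa [Real.norm_eq_abs, Measure.real] using this
        · filter_upwards [haeβ] with t ht
          have := hp t ht
          rw [Real.norm_eq_abs, abs_sub_comm]
          exact le_of_lt this
      have : |∫ t, g t ∂α - ∫ t, g t ∂β| ≤ (ε / (M + 1)) * M := by
        have tri : |∫ t, g t ∂α - ∫ t, g t ∂β| ≤
            |∫ t, g t ∂α - ∫ t, p.eval t ∂α| + |∫ t, g t ∂β - ∫ t, p.eval t ∂β| := by
          rw [hpeq]
          have := abs_sub_abs_le_abs_sub (∫ t, g t ∂α) (∫ t, g t ∂β)
          calc |∫ t, g t ∂α - ∫ t, g t ∂β|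
              = |(∫ t, g t ∂α - ∫ t, p.eval t ∂β) - (∫ t, g t ∂β - ∫ t, p.eval t ∂β)| := by
                ring_nf
            _ ≤ _ := abs_sub _ _
        calc |∫ t, g t ∂α - ∫ t, g t ∂β|
            ≤ |∫ t, g t ∂α - ∫ t, p.eval t ∂α| + |∫ t, g t ∂β - ∫ t, p.eval t ∂β| := tri
          _ ≤ (ε / (M + 1)) * (α Set.univ).toReal + (ε / (M + 1)) * (β Set.univ).toReal :=
              add_le_add hgpα hgpβ
          _ = (ε / (M + 1)) * M := by rw [hM]; ring
      refine le_trans this ?_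
      rw [zero_add]
      calc (ε / (M + 1)) * M ≤ (ε / (M + 1)) * (M + 1) :=
            mul_le_mul_of_nonneg_left (by linarith) (le_of_lt hε')
        _ = ε := by field_simp
    have : |∫ t, g t ∂α - ∫ t, g t ∂β| ≤ 0 := le_of_forall_pos_le_add habs
    have := abs_nonpos_iff.mp this
    linarith [sub_eq_zero.mp this]
  -- now conclude via bounded continuous ℝ≥0-valued functions
  refine ext_of_forall_lintegral_eq_of_IsFiniteMeasure fun f => ?_
  obtain ⟨Cf, hCf⟩ := f.bounded
  have hbound : ∀ t : ℝ, |((f t : ℝ≥0) : ℝ)| ≤ Cf + (f 0 : ℝ) := by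
    intro t
    have h1 : dist (f t) (f 0) ≤ Cf := hCf t 0
    rw [NNReal.dist_eq] at h1
    rw [abs_of_nonneg ((f t).coe_nonneg)]
    have := abs_le.1 h1
    linarith [this.2]
  have hcont : Continuous fun t : ℝ => ((f t : ℝ≥0) : ℝ) :=
    NNReal.continuous_coe.comp f.continuous
  have hintα : Integrable (fun t => ((f t : ℝ≥0) : ℝ)) α :=
    (integrable_const (Cf + (f 0 : ℝ))).mono' hcont.aestronglyMeasurable
      (Filter.Eventually.of_forall fun t => by simpa [Real.norm_eq_abs] using hbound t)
  have hintβ : Integrable (fun t => ((f t : ℝ≥0) : ℝ)) β :=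
    (integrable_const (Cf + (f 0 : ℝ))).mono' hcont.aestronglyMeasurable
      (Filter.Eventually.of_forall fun t => by simpa [Real.norm_eq_abs] using hbound t)
  rw [lintegral_coe_eq_integral f hintα, lintegral_coe_eq_integral f hintβ,
    key _ hcont _ hbound]

end Aux

/-- generalised signed Radon measures `μ = μ⁺ - μ⁻` and `ν = ν⁺ - ν⁻` on
`[0,∞)` whose variations have finite Laplace transforms on `(0,∞)` are equal as soon as
their Laplace transforms agree for all `λ > 0`. -/
theorem generalised_signed_measure_laplace_determines (μp μn νp νn : Measure ℝ≥0)
    (hRadonμp : IsLocallyFiniteMeasure μp ∧ μp.InnerRegular)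
    (hRadonμn : IsLocallyFiniteMeasure μn ∧ μn.InnerRegular)
    (hRadonνp : IsLocallyFiniteMeasure νp ∧ νp.InnerRegular)
    (hRadonνn : IsLocallyFiniteMeasure νn ∧ νn.InnerRegular)
    (hsingμ : μp.MutuallySingular μn) (hsingν : νp.MutuallySingular νn)
    (hintμ : ∀ l : ℝ, 0 < l →
      (∫⁻ x, ENNReal.ofReal (Real.exp (-(l * (x : ℝ)))) ∂(μp + μn)) ≠ ⊤)
    (hintν : ∀ l : ℝ, 0 < l →
      (∫⁻ x, ENNReal.ofReal (Real.exp (-(l * (x : ℝ)))) ∂(νp + νn)) ≠ ⊤)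
    (hlap : ∀ l : ℝ, 0 < l →
      (∫ x, Real.exp (-(l * (x : ℝ))) ∂μp) - (∫ x, Real.exp (-(l * (x : ℝ))) ∂μn) =
      (∫ x, Real.exp (-(l * (x : ℝ))) ∂νp) - (∫ x, Real.exp (-(l * (x : ℝ))) ∂νn)) :
    μp = νp ∧ μn = νn := by
  classical
  -- notation
  set w : ℝ≥0 → ℝ≥0∞ := fun x => ENNReal.ofReal (Real.exp (-(x : ℝ))) with hw
  have hwmeas : Measurable w := by
    apply ENNReal.measurable_ofReal.comp
    exact (Real.continuous_exp.comp (continuous_neg.comp NNReal.continuous_coe)).measurable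
  set E : ℝ≥0 → ℝ := fun x => Real.exp (-(x : ℝ)) with hE
  have hEcont : Continuous E := Real.continuous_exp.comp (continuous_neg.comp NNReal.continuous_coe)
  have hEmeas : Measurable E := hEcont.measurable
  have hEinj : Function.Injective E := by
    intro a b hab
    have := Real.exp_injective hab
    exact NNReal.coe_injective (by linarith [neg_injective this])
  have hEemb : MeasurableEmbedding E := hEcont.measurableEmbedding hEinj
  -- basic finiteness: each individual lintegral is finite
  have hfinμp : ∀ l : ℝ, 0 < l →
      (∫⁻ x, ENNReal.ofReal (Real.exp (-(l * (x : ℝ)))) ∂μp) ≠ ⊤ := fun l hl => by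
    have := hintμ l hl
    rw [lintegral_add_measure] at this
    exact fun h => this (by rw [h]; simp)
  have hfinμn : ∀ l : ℝ, 0 < l →
      (∫⁻ x, ENNReal.ofReal (Real.exp (-(l * (x : ℝ)))) ∂μn) ≠ ⊤ := fun l hl => by
    have := hintμ l hl
    rw [lintegral_add_measure] at this
    exact fun h => this (by rw [h]; simp)
  have hfinνp : ∀ l : ℝ, 0 < l →
      (∫⁻ x, ENNReal.ofReal (Real.exp (-(l * (x : ℝ)))) ∂νp) ≠ ⊤ := fun l hl => by
    have := hintν l hl
    rw [lintegral_add_measure] at this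
    exact fun h => this (by rw [h]; simp)
  have hfinνn : ∀ l : ℝ, 0 < l →
      (∫⁻ x, ENNReal.ofReal (Real.exp (-(l * (x : ℝ)))) ∂νn) ≠ ⊤ := fun l hl => by
    have := hintν l hl
    rw [lintegral_add_measure] at this
    exact fun h => this (by rw [h]; simp)
  -- Bochner integral equals toReal of lintegral
  have hBochner : ∀ (κ : Measure ℝ≥0) (l : ℝ),
      ∫ x, Real.exp (-(l * (x : ℝ))) ∂κ =
        (∫⁻ x, ENNReal.ofReal (Real.exp (-(l * (x : ℝ)))) ∂κ).toReal := by
    intro κ l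
    refine integral_eq_lintegral_of_nonneg_ae
      (Filter.Eventually.of_forall fun x => (Real.exp_pos _).le) ?_
    exact (Real.continuous_exp.comp
      ((continuous_const.mul NNReal.continuous_coe).neg)).aestronglyMeasurable
  -- combined ENNReal Laplace equality
  have hlapENN : ∀ l : ℝ, 0 < l →
      (∫⁻ x, ENNReal.ofReal (Real.exp (-(l * (x : ℝ)))) ∂(μp + νn)) =
      (∫⁻ x, ENNReal.ofReal (Real.exp (-(l * (x : ℝ)))) ∂(νp + μn)) := by
    intro l hl
    rw [lintegral_add_measure, lintegral_add_measure]
    have h1 := hlap l hl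
    rw [hBochner μp l, hBochner μn l, hBochner νp l, hBochner νn l] at h1
    have e1 := hfinμp l hl; have e2 := hfinμn l hl
    have e3 := hfinνp l hl; have e4 := hfinνn l hl
    have htr : ((∫⁻ x, ENNReal.ofReal (Real.exp (-(l * (x : ℝ)))) ∂μp) +
        (∫⁻ x, ENNReal.ofReal (Real.exp (-(l * (x : ℝ)))) ∂νn)).toReal =
        ((∫⁻ x, ENNReal.ofReal (Real.exp (-(l * (x : ℝ)))) ∂νp) +
        (∫⁻ x, ENNReal.ofReal (Real.exp (-(l * (x : ℝ)))) ∂μn)).toReal := by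
      rw [ENNReal.toReal_add e1 e4, ENNReal.toReal_add e3 e2]
      linarith
    exact (ENNReal.toReal_eq_toReal_iff' (ENNReal.add_ne_top.2 ⟨e1, e4⟩)
      (ENNReal.add_ne_top.2 ⟨e3, e2⟩)).mp htr
  -- the transformed measures
  set A : Measure ℝ := ((μp + νn).withDensity w).map E with hA
  set B : Measure ℝ := ((νp + μn).withDensity w).map E with hB
  -- generic facts about T κ := (κ.withDensity w).map E
  have hTmoment : ∀ (κ : Measure ℝ≥0) (n : ℕ),
      ∫⁻ t, ENNReal.ofReal (t ^ n) ∂((κ.withDensity w).map E) =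
        ∫⁻ x, ENNReal.ofReal (Real.exp (-(((n : ℝ) + 1) * (x : ℝ)))) ∂κ := by
    intro κ n
    rw [lintegral_map (by
      exact ENNReal.measurable_ofReal.comp ((continuous_pow n).measurable)) hEmeas]
    rw [lintegral_withDensity_eq_lintegral_mul κ hwmeas (by
      exact ENNReal.measurable_ofReal.comp ((continuous_pow n).measurable.comp hEmeas))]
    refine lintegral_congr fun x => ?_
    simp only [Pi.mul_apply, hw, hE]
    rw [← ENNReal.ofReal_mul (Real.exp_pos _).le]
    congr 1
    have : Real.exp (-(((n : ℝ) + 1) * (x : ℝ))) = Real.exp (-(x:ℝ)) ^ (n + 1) := by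
      rw [show (-(((n : ℝ) + 1) * (x : ℝ))) = ((n + 1 : ℕ) : ℝ) * (-(x:ℝ)) by push_cast; ring]
      exact Real.exp_nat_mul _ (n + 1)
    rw [this, pow_succ]
    ring
  have hTconc : ∀ κ : Measure ℝ≥0,
      ((κ.withDensity w).map E) (Set.Icc (0:ℝ) 1)ᶜ = 0 := by
    intro κ
    rw [Measure.map_apply hEmeas (measurableSet_Icc.compl)]
    convert measure_empty (μ := κ.withDensity w)
    ext x
    simp only [Set.mem_preimage, Set.mem_compl_iff, Set.mem_Icc, Set.mem_empty_iff_false,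
      iff_false, not_not, hE]
    exact ⟨(Real.exp_pos _).le, Real.exp_le_one_iff.mpr (by simp [neg_nonpos])⟩
  have hTfin : ∀ κ : Measure ℝ≥0,
      (∫⁻ x, ENNReal.ofReal (Real.exp (-((1:ℝ) * (x : ℝ)))) ∂κ) ≠ ⊤ →
      IsFiniteMeasure ((κ.withDensity w).map E) := by
    intro κ hκ
    constructor
    rw [Measure.map_apply hEmeas MeasurableSet.univ, Set.preimage_univ]
    rw [withDensity_apply _ MeasurableSet.univ, setLIntegral_univ]
    simp only [one_mul] at hκ
    exact lt_top_iff_ne_top.2 (by simpa [hw] using hκ)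
  have hfinA : IsFiniteMeasure A := by
    refine hTfin _ ?_
    rw [lintegral_add_measure]
    exact ENNReal.add_ne_top.2 ⟨hfinμp 1 one_pos, hfinνn 1 one_pos⟩
  have hfinB : IsFiniteMeasure B := by
    refine hTfin _ ?_
    rw [lintegral_add_measure]
    exact ENNReal.add_ne_top.2 ⟨hfinνp 1 one_pos, hfinμn 1 one_pos⟩
  -- moments of A and B agree
  have hmom : ∀ n : ℕ, ∫ t, t ^ n ∂A = ∫ t, t ^ n ∂B := by
    intro n
    have haeA : ∀ᵐ t ∂A, t ∈ Set.Icc (0:ℝ) 1 := by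
      rw [Filter.eventually_iff, mem_ae_iff]; exact hTconc (μp + νn)
    have haeB : ∀ᵐ t ∂B, t ∈ Set.Icc (0:ℝ) 1 := by
      rw [Filter.eventually_iff, mem_ae_iff]; exact hTconc (νp + μn)
    have hAeq : ∫ t, t ^ n ∂A = (∫⁻ t, ENNReal.ofReal (t ^ n) ∂A).toReal := by
      refine integral_eq_lintegral_of_nonneg_ae ?_ (continuous_pow n).aestronglyMeasurable
      filter_upwards [haeA] with t ht
      exact pow_nonneg ht.1 n
    have hBeq : ∫ t, t ^ n ∂B = (∫⁻ t, ENNReal.ofReal (t ^ n) ∂B).toReal := by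
      refine integral_eq_lintegral_of_nonneg_ae ?_ (continuous_pow n).aestronglyMeasurable
      filter_upwards [haeB] with t ht
      exact pow_nonneg ht.1 n
    rw [hAeq, hBeq, hA, hB, hTmoment, hTmoment, hlapENN ((n : ℝ) + 1) (by positivity)]
  -- conclude A = B
  haveI := hfinA; haveI := hfinB
  have hABeq : A = B :=
    aux_ext_of_moments A B (hTconc (μp + νn)) (hTconc (νp + μn)) hmom
  -- undo the map
  have hWD : (μp + νn).withDensity w = (νp + μn).withDensity w := by
    ext s hs
    have h1 : ((μp + νn).withDensity w) s = A (E '' s) := by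
      rw [hA, Measure.map_apply hEmeas (hEemb.measurableSet_image.2 hs),
        Function.Injective.preimage_image hEinj]
    have h2 : ((νp + μn).withDensity w) s = B (E '' s) := by
      rw [hB, Measure.map_apply hEmeas (hEemb.measurableSet_image.2 hs),
        Function.Injective.preimage_image hEinj]
    rw [h1, h2, hABeq]
  -- undo the density
  have hsum : μp + νn = νp + μn := by
    have hne0 : ∀ᵐ x ∂(μp + νn), w x ≠ 0 :=
      Filter.Eventually.of_forall fun x => by
        simp [hw, ENNReal.ofReal_eq_zero, not_le, Real.exp_pos]
    have hnetop : ∀ᵐ x ∂(μp + νn), w x ≠ ⊤ :=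
      Filter.Eventually.of_forall fun x => ENNReal.ofReal_ne_top
    have hne0' : ∀ᵐ x ∂(νp + μn), w x ≠ 0 :=
      Filter.Eventually.of_forall fun x => by
        simp [hw, ENNReal.ofReal_eq_zero, not_le, Real.exp_pos]
    have hnetop' : ∀ᵐ x ∂(νp + μn), w x ≠ ⊤ :=
      Filter.Eventually.of_forall fun x => ENNReal.ofReal_ne_top
    calc μp + νn = ((μp + νn).withDensity w).withDensity (fun x => (w x)⁻¹) :=
          (withDensity_inv_same hwmeas hne0 hnetop).symm
      _ = ((νp + μn).withDensity w).withDensity (fun x => (w x)⁻¹) := by rw [hWD]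
      _ = νp + μn := withDensity_inv_same hwmeas hne0' hnetop'
  -- use mutual singularity to split
  obtain ⟨s, hsm, hs1, hs2⟩ := hsingμ
  obtain ⟨t, htm, ht1, ht2⟩ := hsingν
  -- μp s = 0, μn sᶜ = 0, νp t = 0, νn tᶜ = 0
  have happ : ∀ u : Set ℝ≥0, μp u + νn u = νp u + μn u := by
    intro u
    have := congrArg (fun m : Measure ℝ≥0 => m u) hsum
    simpa [Measure.add_apply] using this
  constructor
  · ext X hX
    -- μp lives on sᶜ, νp on tᶜ
    have hXp : μp X = μp (X \ s) := by
      rw [← measure_inter_add_diff X hsm]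
      have : μp (X ∩ s) = 0 := le_antisymm (le_trans (measure_mono Set.inter_subset_right)
        hs1.le) zero_le
      rw [this, zero_add]
    have hXq : νp X = νp (X \ t) := by
      rw [← measure_inter_add_diff X htm]
      have : νp (X ∩ t) = 0 := le_antisymm (le_trans (measure_mono Set.inter_subset_right)
        ht1.le) zero_le
      rw [this, zero_add]
    -- split X \ s by t
    have h1 : μp ((X \ s) ∩ t) = 0 := by
      have h := happ ((X \ s) ∩ t)
      have hνn : νn ((X \ s) ∩ t) = νn ((X \ s) ∩ t) := rfl
      have hμn : μn ((X \ s) ∩ t) = 0 := le_antisymm (le_trans (measure_mono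
        (fun x hx => hx.1.2)) hs2.le) zero_le
      have hνp : νp ((X \ s) ∩ t) = 0 := le_antisymm (le_trans (measure_mono
        Set.inter_subset_right) ht1.le) zero_le
      rw [hμn, hνp, zero_add] at h
      exact le_antisymm (le_trans le_self_add h.le) zero_le
    have h2 : νp ((X \ t) ∩ s) = 0 := by
      have h := happ ((X \ t) ∩ s)
      have hμp : μp ((X \ t) ∩ s) = 0 := le_antisymm (le_trans (measure_mono
        Set.inter_subset_right) hs1.le) zero_le
      have hνn : νn ((X \ t) ∩ s) = 0 := le_antisymm (le_trans (measure_mono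
        (fun x hx => hx.1.2)) ht2.le) zero_le
      rw [hμp, hνn, zero_add] at h
      exact le_antisymm (le_trans le_self_add h.symm.le) zero_le
    -- core set
    have hcore : μp ((X \ s) \ t) = νp ((X \ s) \ t) := by
      have h := happ ((X \ s) \ t)
      have hνn : νn ((X \ s) \ t) = 0 := le_antisymm (le_trans (measure_mono
        (fun x hx => hx.2)) ht2.le) zero_le
      have hμn : μn ((X \ s) \ t) = 0 := le_antisymm (le_trans (measure_mono
        (fun x hx => hx.1.2)) hs2.le) zero_le
      rw [hνn, hμn, add_zero, add_zero] at h
      exact h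
    have hcore' : (X \ t) \ s = (X \ s) \ t := by
      ext x; simp only [Set.mem_diff]; tauto
    calc μp X = μp (X \ s) := hXp
      _ = μp ((X \ s) ∩ t) + μp ((X \ s) \ t) := (measure_inter_add_diff _ htm).symm
      _ = νp ((X \ s) \ t) := by rw [h1, zero_add, hcore]
      _ = νp ((X \ t) ∩ s) + νp ((X \ t) \ s) := by rw [h2, zero_add, hcore']
      _ = νp (X \ t) := measure_inter_add_diff _ hsm
      _ = νp X := hXq.symm
  · ext X hX
    -- μn lives on s, νn on t
    have hXp : μn X = μn (X ∩ s) := by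
      rw [← measure_inter_add_diff X hsm]
      have : μn (X \ s) = 0 := le_antisymm (le_trans (measure_mono
        (fun x hx => hx.2)) hs2.le) zero_le
      rw [this, add_zero]
    have hXq : νn X = νn (X ∩ t) := by
      rw [← measure_inter_add_diff X htm]
      have : νn (X \ t) = 0 := le_antisymm (le_trans (measure_mono
        (fun x hx => hx.2)) ht2.le) zero_le
      rw [this, add_zero]
    have h1 : μn ((X ∩ s) \ t) = 0 := by
      have h := happ ((X ∩ s) \ t)
      have hμp : μp ((X ∩ s) \ t) = 0 := le_antisymm (le_trans (measure_mono
        (fun x hx => hx.1.2)) hs1.le) zero_le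
      have hνn : νn ((X ∩ s) \ t) = 0 := le_antisymm (le_trans (measure_mono
        (fun x hx => hx.2)) ht2.le) zero_le
      rw [hμp, hνn, zero_add] at h
      exact le_antisymm (le_trans le_add_self h.symm.le) zero_le
    have h2 : νn ((X ∩ t) \ s) = 0 := by
      have h := happ ((X ∩ t) \ s)
      have hνp : νp ((X ∩ t) \ s) = 0 := le_antisymm (le_trans (measure_mono
        (fun x hx => hx.1.2)) ht1.le) zero_le
      have hμn : μn ((X ∩ t) \ s) = 0 := le_antisymm (le_trans (measure_mono
        (fun x hx => hx.2)) hs2.le) zero_le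
      rw [hνp, hμn, zero_add] at h
      exact le_antisymm (le_trans le_add_self h.le) zero_le
    have hcore : μn ((X ∩ s) ∩ t) = νn ((X ∩ s) ∩ t) := by
      have h := happ ((X ∩ s) ∩ t)
      have hμp : μp ((X ∩ s) ∩ t) = 0 := le_antisymm (le_trans (measure_mono
        (fun x hx => hx.1.2)) hs1.le) zero_le
      have hνp : νp ((X ∩ s) ∩ t) = 0 := le_antisymm (le_trans (measure_mono
        Set.inter_subset_right) ht1.le) zero_le
      rw [hμp, hνp, zero_add, zero_add] at h
      exact h.symm
    have hcore' : (X ∩ t) ∩ s = (X ∩ s) ∩ t := by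
      ext x; simp only [Set.mem_inter_iff]; tauto
    calc μn X = μn (X ∩ s) := hXp
      _ = μn ((X ∩ s) ∩ t) + μn ((X ∩ s) \ t) := (measure_inter_add_diff _ htm).symm
      _ = νn ((X ∩ s) ∩ t) := by rw [h1, add_zero, hcore]
      _ = νn ((X ∩ t) ∩ s) + νn ((X ∩ t) \ s) := by rw [h2, add_zero, hcore']
      _ = νn (X ∩ t) := measure_inter_add_diff _ hsm
      _ = νn X := hXq.symm
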